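/- Let k ≥ 1 be a natural number and define the integer polynomial f_k(X) = k·X^{k+4} − 2·X^{k+3} − (k+2)·X^{k+2} + (k+2)·X^3 + 2·X^2 − k·X. Then (X−1)^3 divides f_k but (X−1)^4 does not divide f_k; equivalently f_k(1) = f_k'(1) = f_k''(1) = 0 while f_k'''(1) ≠ 0. -/
import Mathlib


open Polynomial

/-- The numerator polynomial of the stationarity condition for the continuum eigenvalue
function of the `k`-body Ising Hamiltonian. -/
noncomputable def stationarityPoly (k : ℕ) : Polynomial ℤ :=
  (k : Polynomial ℤ) * X ^ (k + 4) - 2 * X ^ (k + 3) - ((k : Polynomial ℤ) + 2) * X ^ (k + 2)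
    + ((k : Polynomial ℤ) + 2) * X ^ 3 + 2 * X ^ 2 - (k : Polynomial ℤ) * X

/-- `(X-1)^3` divides `f_k` but `(X-1)^4` does not; equivalently
`f_k(1) = f_k'(1) = f_k''(1) = 0` while `f_k'''(1) ≠ 0`. -/
theorem stationarityPoly_triple_root (k : ℕ) (hk : 1 ≤ k) :
    ((X - 1) ^ 3 ∣ stationarityPoly k ∧ ¬ (X - 1) ^ 4 ∣ stationarityPoly k) ∧
    ((stationarityPoly k).eval 1 = 0 ∧
      (derivative (stationarityPoly k)).eval 1 = 0 ∧
      (derivative (derivative (stationarityPoly k))).eval 1 = 0 ∧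
      (derivative (derivative (derivative (stationarityPoly k)))).eval 1 ≠ 0) := by
  have e0 : (stationarityPoly k).eval 1 = 0 := by simp [stationarityPoly]
  have e1 : (derivative (stationarityPoly k)).eval 1 = 0 := by
    simp [stationarityPoly, derivative_X_pow]; ring
  have e2 : (derivative (derivative (stationarityPoly k))).eval 1 = 0 := by
    simp [stationarityPoly, derivative_X_pow]; ring
  have e3 : (derivative (derivative (derivative (stationarityPoly k)))).eval 1 ≠ 0 := by
    simp [stationarityPoly, derivative_X_pow]
    intro h
    nlinarith [h, sq_nonneg (k:ℤ), (by exact_mod_cast hk : (1:ℤ) ≤ k)]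
  have hp0 : stationarityPoly k ≠ 0 := by
    intro h
    apply e3
    simp [h]
  have hlt : 2 < rootMultiplicity 1 (stationarityPoly k) := by
    rw [lt_rootMultiplicity_iff_isRoot_iterate_derivative hp0]
    intro m hm
    interval_cases m
    · exact e0
    · exact e1
    · exact e2
  constructor
  · constructor
    · rw [show (X - 1 : Polynomial ℤ) = X - C 1 by simp]
      exact (le_rootMultiplicity_iff hp0).1 hlt
    · intro hdvd
      have h4 : 4 ≤ rootMultiplicity 1 (stationarityPoly k) := by
        refine (le_rootMultiplicity_iff hp0).2 ?_
        simpa using hdvd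
      have := isRoot_iterate_derivative_of_lt_rootMultiplicity
        (p := stationarityPoly k) (t := 1) (n := 3) (by omega)
      apply e3
      simpa [Function.iterate_succ_apply'] using this
  · exact ⟨e0, e1, e2, e3⟩
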